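/- Let α, β be weak compositions of n with k and l parts. The map sending a permutation w ∈ S_n to the k × l matrix M with M_{i,j} = #{b in block j of β : w(b) in block i of α} induces a bijection between double cosets S_α \ S_n / S_β and nonnegative-integer k × l matrices with row sums α and column sums β. -/

import Mathlib

/-- `r` lies in the `i`-th block of the weak composition `α` (0-indexed blocks):
`α_1 + ... + α_i ≤ r < α_1 + ... + α_{i+1}` (with `r` 0-indexed). -/
def inBlk (α : ℕ → ℕ) (i r : ℕ) : Prop :=
  (∑ s ∈ Finset.range i, α s) ≤ r ∧ r < ∑ s ∈ Finset.range (i + 1), α s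

/-- The block-counting matrix of a permutation `w` relative to `(α, β)`:
`matOf α β w i j = #{b in block j of β : w(b) in block i of α}`. -/
noncomputable def matOf {n : ℕ} (α β : ℕ → ℕ) (w : Equiv.Perm (Fin n)) (i j : ℕ) : ℕ :=
  Nat.card {b : Fin n // inBlk β j (b : ℕ) ∧ inBlk α i ((w b : Fin n) : ℕ)}

/-- The permutation `a` preserves every block of `α` setwise. -/
def presBlocks {n : ℕ} (α : ℕ → ℕ) (a : Equiv.Perm (Fin n)) : Prop :=
  ∀ (i : ℕ) (r : Fin n), inBlk α i (r : ℕ) → inBlk α i ((a r : Fin n) : ℕ)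

namespace StmtAux

lemma blk_mono (γ : ℕ → ℕ) : Monotone fun i => ∑ s ∈ Finset.range i, γ s :=
  fun _ _ h => Finset.sum_le_sum_of_subset (Finset.range_subset_range.mpr h)

lemma blk_unique {γ : ℕ → ℕ} {i i' r : ℕ} (h : inBlk γ i r) (h' : inBlk γ i' r) : i = i' := by
  rcases lt_trichotomy i i' with hlt | he | hgt
  · exact absurd (lt_of_lt_of_le h.2 ((blk_mono γ (Nat.succ_le_of_lt hlt)).trans h'.1))
      (lt_irrefl r)
  · exact he
  · exact absurd (lt_of_lt_of_le h'.2 ((blk_mono γ (Nat.succ_le_of_lt hgt)).trans h.1))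
      (lt_irrefl r)

noncomputable def bidx (γ : ℕ → ℕ) (r : ℕ) : ℕ :=
  sInf {i | r < ∑ s ∈ Finset.range (i + 1), γ s}

lemma bidx_inBlk {γ : ℕ → ℕ} {r : ℕ} (h : ∃ i, r < ∑ s ∈ Finset.range (i + 1), γ s) :
    inBlk γ (bidx γ r) r := by
  have hmem : bidx γ r ∈ {i | r < ∑ s ∈ Finset.range (i + 1), γ s} := Nat.sInf_mem h
  refine ⟨?_, hmem⟩
  rcases Nat.eq_zero_or_pos (bidx γ r) with h0 | h0
  · simp [h0]
  · have : bidx γ r - 1 ∉ {i | r < ∑ s ∈ Finset.range (i + 1), γ s} :=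
      Nat.notMem_of_lt_sInf (Nat.sub_lt h0 one_pos)
    simp only [Set.mem_setOf_eq, Nat.sub_add_cancel h0, not_lt] at this
    exact this

lemma bidx_spec {γ : ℕ → ℕ} {k r : ℕ} (h : r < ∑ s ∈ Finset.range k, γ s) :
    inBlk γ (bidx γ r) r ∧ bidx γ r < k := by
  have hk : 0 < k := by
    rcases Nat.eq_zero_or_pos k with h0 | h0
    · simp [h0] at h
    · exact h0
  have hex : ∃ i, r < ∑ s ∈ Finset.range (i + 1), γ s :=
    ⟨k - 1, by rwa [Nat.sub_add_cancel hk]⟩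
  refine ⟨bidx_inBlk hex, ?_⟩
  have : bidx γ r ≤ k - 1 := Nat.sInf_le (by rw [Set.mem_setOf_eq, Nat.sub_add_cancel hk]; exact h)
  exact lt_of_le_of_lt this (Nat.sub_lt hk one_pos)

lemma bidx_eq {γ : ℕ → ℕ} {i r : ℕ} (h : inBlk γ i r) : bidx γ r = i :=
  blk_unique (bidx_inBlk ⟨i, h.2⟩) h

lemma sum_stable {γ : ℕ → ℕ} {k i : ℕ} (hsupp : ∀ j, k ≤ j → γ j = 0) (h : k ≤ i) :
    ∑ s ∈ Finset.range i, γ s = ∑ s ∈ Finset.range k, γ s :=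
  (Finset.sum_subset (Finset.range_subset_range.mpr h)
    (fun x _ hx => hsupp x (le_of_not_gt (fun hc => hx (Finset.mem_range.mpr hc))))).symm

lemma inBlk_lt {γ : ℕ → ℕ} {n k i r : ℕ} (hsupp : ∀ j, k ≤ j → γ j = 0)
    (hsum : ∑ s ∈ Finset.range k, γ s = n) (hr : r < n) (h : inBlk γ i r) : i < k := by
  by_contra hc
  have h2 : n ≤ r := by
    rw [← hsum, ← sum_stable hsupp (le_of_not_gt hc)]; exact h.1
  exact absurd (lt_of_le_of_lt h2 hr) (lt_irrefl n)

lemma pres_back {n l : ℕ} {β : ℕ → ℕ} (hsum : ∑ s ∈ Finset.range l, β s = n)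
    {p : Equiv.Perm (Fin n)} (hp : presBlocks β p) (j : ℕ) (x : Fin n)
    (h : inBlk β j ((p x : Fin n) : ℕ)) : inBlk β j (x : ℕ) := by
  have hx : (x : ℕ) < ∑ s ∈ Finset.range l, β s := by rw [hsum]; exact x.2
  have h1 := (bidx_spec hx).1
  have h2 := hp _ x h1
  rwa [blk_unique h h2]

lemma pres_inv {n l : ℕ} {β : ℕ → ℕ} (hsum : ∑ s ∈ Finset.range l, β s = n)
    {p : Equiv.Perm (Fin n)} (hp : presBlocks β p) : presBlocks β p⁻¹ := by
  intro j r hr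
  have : inBlk β j ((p (p⁻¹ r) : Fin n) : ℕ) := by
    rwa [← Equiv.Perm.mul_apply, mul_inv_cancel, Equiv.Perm.one_apply]
  exact pres_back hsum hp j _ this

lemma card_interval {n aa bb : ℕ} (h : bb ≤ n) :
    Nat.card {x : Fin n // aa ≤ (x : ℕ) ∧ (x : ℕ) < bb} = bb - aa := by
  have e : {x : Fin n // aa ≤ (x : ℕ) ∧ (x : ℕ) < bb} ≃ (Finset.Ico aa bb : Finset ℕ) :=
    { toFun := fun x => ⟨x.1, Finset.mem_Ico.mpr x.2⟩
      invFun := fun m => ⟨⟨m.1, lt_of_lt_of_le (Finset.mem_Ico.mp m.2).2 h⟩,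
        (Finset.mem_Ico.mp m.2).1, (Finset.mem_Ico.mp m.2).2⟩
      left_inv := fun x => rfl
      right_inv := fun m => rfl }
  rw [Nat.card_congr e, Nat.card_eq_finsetCard, Nat.card_Ico]

end StmtAux

open StmtAux

/-- Let `α, β` be weak compositions of `n` with `k` and `l` parts.  The map
`w ↦ matOf α β w` induces a bijection between the double cosets `S_α \ S_n / S_β`
(where `S_α` is the Young subgroup preserving the blocks of `α`) and nonnegative-integer
`k × l` matrices with row sums `α` and column sums `β`: two permutations have the same
block-counting matrix iff they lie in the same double coset, and every matrix with the
prescribed row and column sums arises. -/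
theorem stmt_10 (n k l : ℕ) (α β : ℕ → ℕ)
    (hαsupp : ∀ i, k ≤ i → α i = 0) (hαsum : ∑ i ∈ Finset.range k, α i = n)
    (hβsupp : ∀ j, l ≤ j → β j = 0) (hβsum : ∑ j ∈ Finset.range l, β j = n) :
    (∀ v w : Equiv.Perm (Fin n),
        (∀ i j, matOf α β v i j = matOf α β w i j) ↔
          ∃ a b : Equiv.Perm (Fin n), presBlocks α a ∧ presBlocks β b ∧ w = a * v * b) ∧
    (∀ M : ℕ → ℕ → ℕ, (∀ i j, k ≤ i ∨ l ≤ j → M i j = 0) →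
        (∀ i, ∑ j ∈ Finset.range l, M i j = α i) →
        (∀ j, ∑ i ∈ Finset.range k, M i j = β j) →
        ∃ w : Equiv.Perm (Fin n), ∀ i j, matOf α β w i j = M i j) := by
  have hxlt : ∀ x : Fin n, (x : ℕ) < ∑ s ∈ Finset.range l, β s := fun x => by
    rw [hβsum]; exact x.2
  have hvlt : ∀ x : Fin n, (x : ℕ) < ∑ s ∈ Finset.range k, α s := fun x => by
    rw [hαsum]; exact x.2
  constructor
  · intro v w
    constructor
    · -- equal matrices → same double coset
      intro h
      have key : ∀ i j, Nonempty ({x : Fin n // inBlk β j (x : ℕ) ∧ inBlk α i ((v x : Fin n) : ℕ)}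
          ≃ {x : Fin n // inBlk β j (x : ℕ) ∧ inBlk α i ((w x : Fin n) : ℕ)}) := by
        intro i j
        exact Finite.card_eq.mp (h i j)
      have σ := fun i j => (key i j).some
      have hmemβ : ∀ x : Fin n, inBlk β (bidx β (x : ℕ)) (x : ℕ) := fun x =>
        (bidx_spec (hxlt x)).1
      have hmemv : ∀ x : Fin n, inBlk α (bidx α ((v x : Fin n) : ℕ)) ((v x : Fin n) : ℕ) :=
        fun x => (bidx_spec (hvlt (v x))).1
      have hmemw : ∀ x : Fin n, inBlk α (bidx α ((w x : Fin n) : ℕ)) ((w x : Fin n) : ℕ) :=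
        fun x => (bidx_spec (hvlt (w x))).1
      let Ev : Fin n ≃ Σ p : ℕ × ℕ,
          {x : Fin n // inBlk β p.2 (x : ℕ) ∧ inBlk α p.1 ((v x : Fin n) : ℕ)} :=
        { toFun := fun x => ⟨(bidx α ((v x : Fin n) : ℕ), bidx β (x : ℕ)),
            ⟨x, hmemβ x, hmemv x⟩⟩
          invFun := fun s => s.2.1
          left_inv := fun x => rfl
          right_inv := by
            rintro ⟨⟨i, j⟩, ⟨x, hx1, hx2⟩⟩
            have h1 := bidx_eq hx1
            have h2 := bidx_eq hx2
            subst h1; subst h2; rfl }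
      let Ew : Fin n ≃ Σ p : ℕ × ℕ,
          {x : Fin n // inBlk β p.2 (x : ℕ) ∧ inBlk α p.1 ((w x : Fin n) : ℕ)} :=
        { toFun := fun x => ⟨(bidx α ((w x : Fin n) : ℕ), bidx β (x : ℕ)),
            ⟨x, hmemβ x, hmemw x⟩⟩
          invFun := fun s => s.2.1
          left_inv := fun x => rfl
          right_inv := by
            rintro ⟨⟨i, j⟩, ⟨x, hx1, hx2⟩⟩
            have h1 := bidx_eq hx1
            have h2 := bidx_eq hx2
            subst h1; subst h2; rfl }
      let e : Equiv.Perm (Fin n) :=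
        (Ev.trans (Equiv.sigmaCongrRight fun p => σ p.1 p.2)).trans Ew.symm
      have e_def : ∀ x : Fin n,
          e x = (σ (bidx α ((v x : Fin n) : ℕ)) (bidx β (x : ℕ))
            ⟨x, hmemβ x, hmemv x⟩ : _).1 := fun x => rfl
      have heβ : ∀ x : Fin n, inBlk β (bidx β (x : ℕ)) ((e x : Fin n) : ℕ) := by
        intro x
        rw [e_def x]
        exact (σ _ _ ⟨x, hmemβ x, hmemv x⟩).2.1
      have heα : ∀ x : Fin n,
          inBlk α (bidx α ((v x : Fin n) : ℕ)) ((w (e x) : Fin n) : ℕ) := by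
        intro x
        rw [e_def x]
        exact (σ _ _ ⟨x, hmemβ x, hmemv x⟩).2.2
      have hpe : presBlocks β e := by
        intro j r hr
        rw [← bidx_eq hr]
        exact heβ r
      refine ⟨w * e * v⁻¹, e⁻¹, ?_, pres_inv hβsum hpe, by group⟩
      intro i r hr
      have hvy : ((v (v⁻¹ r) : Fin n) : ℕ) = (r : ℕ) := by
        rw [← Equiv.Perm.mul_apply, mul_inv_cancel, Equiv.Perm.one_apply]
      have hr' : inBlk α i ((v (v⁻¹ r) : Fin n) : ℕ) := by rwa [hvy]
      have hb2 := bidx_eq hr'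
      have : ((w * e * v⁻¹) r : Fin n) = w (e (v⁻¹ r)) := rfl
      rw [this, ← hb2]
      exact heα (v⁻¹ r)
    · -- same double coset → equal matrices
      rintro ⟨a, b, ha, hb, rfl⟩
      intro i j
      unfold matOf
      refine (Nat.card_congr (Equiv.subtypeEquiv (b : Equiv.Perm (Fin n)) fun x => ?_)).symm
      simp only [Equiv.Perm.mul_apply]
      constructor
      · rintro ⟨h1, h2⟩
        exact ⟨hb j x h1, pres_back hαsum ha i _ h2⟩
      · rintro ⟨h1, h2⟩
        exact ⟨pres_back hβsum hb j x h1, ha i _ h2⟩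
  · -- surjectivity
    intro M hM0 hrow hcol
    let jx : Fin n → ℕ := fun x => bidx β (x : ℕ)
    let ox : Fin n → ℕ := fun x => (x : ℕ) - ∑ s ∈ Finset.range (jx x), β s
    let ix : Fin n → ℕ := fun x => bidx (fun i' => M i' (jx x)) (ox x)
    let tx : Fin n → ℕ := fun x =>
      (∑ j' ∈ Finset.range (jx x), M (ix x) j') +
        (ox x - ∑ i' ∈ Finset.range (ix x), M i' (jx x))
    let fv : Fin n → ℕ := fun x => (∑ s ∈ Finset.range (ix x), α s) + tx x
    have hjx : ∀ x : Fin n, inBlk β (jx x) (x : ℕ) ∧ jx x < l := fun x => bidx_spec (hxlt x)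
    have hox : ∀ x : Fin n, (x : ℕ) = (∑ s ∈ Finset.range (jx x), β s) + ox x ∧
        ox x < β (jx x) := by
      intro x
      obtain ⟨h3, h2⟩ := (hjx x).1
      rw [Finset.sum_range_succ] at h2
      simp only [ox]
      omega
    have hoxlt : ∀ x : Fin n, ox x < ∑ i' ∈ Finset.range k, M i' (jx x) := by
      intro x
      rw [hcol (jx x)]
      exact (hox x).2
    have hix : ∀ x : Fin n, inBlk (fun i' => M i' (jx x)) (ix x) (ox x) ∧ ix x < k :=
      fun x => bidx_spec (hoxlt x)
    have hixlt : ∀ x : Fin n, ix x < k := fun x => (hix x).2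
    have hixle : ∀ x : Fin n, ∑ i' ∈ Finset.range (ix x), M i' (jx x) ≤ ox x :=
      fun x => (hix x).1.1
    have hixlt' : ∀ x : Fin n,
        ox x < ∑ i' ∈ Finset.range (ix x), M i' (jx x) + M (ix x) (jx x) := by
      intro x
      have h := (hix x).1.2
      rwa [Finset.sum_range_succ] at h
    have htx : ∀ x : Fin n, inBlk (fun j' => M (ix x) j') (jx x) (tx x) := by
      intro x
      have h2 := hixle x
      have h3 := hixlt' x
      refine ⟨Nat.le_add_right _ _, ?_⟩
      show tx x < ∑ j' ∈ Finset.range (jx x + 1), M (ix x) j'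
      rw [Finset.sum_range_succ]
      simp only [tx]
      omega
    have hfα : ∀ x : Fin n, inBlk α (ix x) (fv x) := by
      intro x
      refine ⟨Nat.le_add_right _ _, ?_⟩
      rw [Finset.sum_range_succ]
      have h1 : tx x < α (ix x) := by
        rw [← hrow (ix x)]
        calc tx x < ∑ j' ∈ Finset.range (jx x + 1), M (ix x) j' := (htx x).2
        _ ≤ ∑ j' ∈ Finset.range l, M (ix x) j' :=
          blk_mono _ (Nat.succ_le_of_lt (hjx x).2)
      simp only [fv]
      omega
    have hflt : ∀ x : Fin n, fv x < n := by
      intro x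
      calc fv x < ∑ s ∈ Finset.range (ix x + 1), α s := (hfα x).2
      _ ≤ ∑ s ∈ Finset.range k, α s := blk_mono _ (Nat.succ_le_of_lt (hixlt x))
      _ = n := hαsum
    let f : Fin n → Fin n := fun x => ⟨fv x, hflt x⟩
    have hinj : Function.Injective f := by
      intro x y hxy
      have hval : fv x = fv y := congrArg Fin.val hxy
      have hieq : ix x = ix y := blk_unique (hval ▸ hfα x) (hfα y)
      have hteq : tx x = tx y := by
        have h := hval
        simp only [fv] at h
        rw [hieq] at h
        exact Nat.add_left_cancel h
      have hjeq : jx x = jx y := by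
        have h1 := htx x
        have h2 := htx y
        rw [hieq, hteq] at h1
        exact blk_unique h1 h2
      have hoeq : ox x = ox y := by
        have h1 := hixle x
        have h2 := hixle y
        have h3 := hteq
        simp only [tx] at h3
        rw [hieq, hjeq] at h3
        rw [hieq, hjeq] at h1
        omega
      have : (x : ℕ) = (y : ℕ) := by
        rw [(hox x).1, (hox y).1, hjeq, hoeq]
      exact Fin.ext this
    let w : Equiv.Perm (Fin n) := Equiv.ofBijective f (Finite.injective_iff_bijective.mp hinj)
    have hw : ∀ x : Fin n, ((w x : Fin n) : ℕ) = fv x := fun x => rfl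
    refine ⟨w, ?_⟩
    intro i j
    by_cases hj : j < l
    · by_cases hi : i < k
      · -- main case
        have hsub : ∑ i' ∈ Finset.range i, M i' j + M i j ≤ β j := by
          have h1 : ∑ i' ∈ Finset.range (i + 1), M i' j ≤ ∑ i' ∈ Finset.range k, M i' j :=
            blk_mono _ (Nat.succ_le_of_lt hi)
          rw [Finset.sum_range_succ] at h1
          rw [← hcol j]
          exact h1
        have hiff : ∀ x : Fin n, (inBlk β j (x : ℕ) ∧ inBlk α i ((w x : Fin n) : ℕ)) ↔
            ((∑ s ∈ Finset.range j, β s) + ∑ i' ∈ Finset.range i, M i' j ≤ (x : ℕ) ∧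
              (x : ℕ) < (∑ s ∈ Finset.range j, β s) + ∑ i' ∈ Finset.range i, M i' j + M i j) := by
          intro x
          constructor
          · rintro ⟨h1, h2⟩
            have hjeq : jx x = j := bidx_eq h1
            have h2' : inBlk α i (fv x) := by rwa [hw x] at h2
            have hieq : ix x = i := blk_unique (hfα x) h2'
            have ho1 := hixle x
            have ho2 := hixlt' x
            rw [hjeq, hieq] at ho1 ho2
            have hxe := (hox x).1
            rw [hjeq] at hxe
            omega
          · rintro ⟨ha1, hb1⟩
            have h1 : inBlk β j (x : ℕ) := by
              refine ⟨by omega, ?_⟩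
              rw [Finset.sum_range_succ]
              omega
            have hjeq : jx x = j := bidx_eq h1
            have hoxv := (hox x).1
            rw [hjeq] at hoxv
            have hio : inBlk (fun i' => M i' (jx x)) i (ox x) := by
              rw [hjeq]
              refine ⟨?_, ?_⟩
              · show ∑ i' ∈ Finset.range i, M i' j ≤ ox x
                omega
              · show ox x < ∑ i' ∈ Finset.range (i + 1), M i' j
                rw [Finset.sum_range_succ]
                omega
            have hieq : ix x = i := bidx_eq hio
            have h2 := hfα x
            rw [hieq] at h2
            exact ⟨h1, by rw [hw x]; exact h2⟩
        have hbb : (∑ s ∈ Finset.range j, β s) + ∑ i' ∈ Finset.range i, M i' j + M i j ≤ n := by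
          have h2 : ∑ s ∈ Finset.range (j + 1), β s ≤ n := by
            rw [← hβsum]
            exact blk_mono β (Nat.succ_le_of_lt hj)
          rw [Finset.sum_range_succ] at h2
          omega
        rw [matOf, Nat.card_congr (Equiv.subtypeEquivRight hiff), card_interval hbb]
        omega
      · -- i ≥ k : empty
        push_neg at hi
        haveI hempty : IsEmpty
            {x : Fin n // inBlk β j (x : ℕ) ∧ inBlk α i ((w x : Fin n) : ℕ)} := by
          refine ⟨fun x => ?_⟩
          have h1 := x.2.2.1
          rw [sum_stable hαsupp hi, hαsum] at h1
          exact absurd (lt_of_le_of_lt h1 (w x.1).2) (lt_irrefl n)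
        rw [matOf, Nat.card_of_isEmpty, hM0 i j (Or.inl hi)]
    · -- j ≥ l : empty
      push_neg at hj
      haveI hempty : IsEmpty
          {x : Fin n // inBlk β j (x : ℕ) ∧ inBlk α i ((w x : Fin n) : ℕ)} := by
        refine ⟨fun x => ?_⟩
        have h1 := x.2.1.1
        rw [sum_stable hβsupp hj, hβsum] at h1
        exact absurd (lt_of_le_of_lt h1 x.1.2) (lt_irrefl n)
      rw [matOf, Nat.card_of_isEmpty, hM0 i j (Or.inr hj)]
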